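/- Let $\{X_t\}$ be a stationary ergodic real-valued process with $|X_t| \le K$ almost surely, and suppose $\hat{X}_{-t}$ are $\sigma(X^{-t})$-measurable, uniformly bounded random variables converging in probability to $\hat{X} = E\{X_0|X^-\}$. Then $|X_0 - \hat{X}_{-t}|^2 \to |X_0 - \hat{X}|^2$ in $L^1(P)$, and the on-line average squared errors satisfy $\frac{1}{n}\sum_{t=0}^{n-1}|X_t - \hat{X}_t|^2 \to E|X_0 - \hat{X}|^2$ in $L^1(P)$, where $\hat{X}_t(\omega) = \hat{X}_{-t}(T^t\omega)$ for the left shift $T$. -/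

import Mathlib

open MeasureTheory Filter Finset

namespace Stmt18

/-- The left shift on two-sided real sequences. -/
def shift (ω : ℤ → ℝ) : ℤ → ℝ := fun n => ω (n + 1)

/-- The σ-algebra of the infinite past `X^- = (…, X_{-2}, X_{-1})`. -/
def pastSA : MeasurableSpace (ℤ → ℝ) :=
  MeasurableSpace.comap (fun ω => fun i : {i : ℤ // i < 0} => ω i.val) MeasurableSpace.pi

/-- The σ-algebra generated by the `t`-past `X^{-t} = (X_{-t}, …, X_{-1})`. -/
def recentSA (t : ℕ) : MeasurableSpace (ℤ → ℝ) :=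
  MeasurableSpace.comap (fun ω => fun i : Fin t => ω (-(t : ℤ) + i)) MeasurableSpace.pi

/-- The optimal predictor `X̂ = E{X₀ | X^-}`. -/
noncomputable def Xopt (μ : Measure (ℤ → ℝ)) : (ℤ → ℝ) → ℝ :=
  μ[(fun ω => ω 0) | pastSA]

end Stmt18

open Stmt18



lemma measurable_shift : Measurable shift :=
  measurable_pi_lambda _ fun n => measurable_pi_apply _

lemma shift_iterate_apply (t : ℕ) (ω : ℤ → ℝ) (n : ℤ) : (shift^[t]) ω n = ω (n + t) := by
  induction t generalizing ω n with
  | zero => simp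
  | succ k ih =>
    rw [Function.iterate_succ_apply, ih]
    simp only [shift]
    congr 1
    push_cast
    ring

section helpers

variable {μ : Measure (ℤ → ℝ)}

lemma ae_comp_iterate (hmp : MeasurePreserving shift μ μ) (t : ℕ) {p : (ℤ → ℝ) → Prop}
    (h : ∀ᵐ ω ∂μ, p ω) : ∀ᵐ ω ∂μ, p ((shift^[t]) ω) :=
  ((hmp.iterate t).quasiMeasurePreserving).ae h

lemma integral_comp_iterate (hmp : MeasurePreserving shift μ μ) (t : ℕ) {h : (ℤ → ℝ) → ℝ}
    (hh : AEStronglyMeasurable h μ) : ∫ ω, h ((shift^[t]) ω) ∂μ = ∫ ω, h ω ∂μ := by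
  have hmap := (hmp.iterate t).map_eq
  rw [← integral_map (measurable_shift.iterate t).aemeasurable (by rw [hmap]; exact hh), hmap]

lemma key_L1_le_L2 [IsProbabilityMeasure μ] (v : Lp ℝ 2 μ) :
    ∫ ω, |(v : (ℤ → ℝ) → ℝ) ω| ∂μ ≤ ‖v‖ := by
  have h1 : ∫ ω, |(v : (ℤ → ℝ) → ℝ) ω| ∂μ = (eLpNorm v 1 μ).toReal := by
    simp_rw [← Real.norm_eq_abs]
    rw [integral_norm_eq_lintegral_enorm (Lp.aestronglyMeasurable v),
      ← eLpNorm_one_eq_lintegral_enorm]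
  rw [h1, Lp.norm_def]
  exact ENNReal.toReal_mono (Lp.eLpNorm_ne_top v)
    (eLpNorm_le_eLpNorm_of_exponent_le one_le_two (Lp.aestronglyMeasurable v))

end helpers

variable {μ : Measure (ℤ → ℝ)}

/-- The Koopman operator of the shift on `L²`. -/
noncomputable def koopman [IsProbabilityMeasure μ] (hmp : MeasurePreserving shift μ μ) :
    Lp ℝ 2 μ →L[ℝ] Lp ℝ 2 μ :=
  have hU0coe : ∀ v : Lp ℝ 2 μ,
      ((Lp.compMeasurePreserving shift hmp v : Lp ℝ 2 μ) : (ℤ → ℝ) → ℝ)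
        =ᵐ[μ] (v : (ℤ → ℝ) → ℝ) ∘ shift :=
    fun v => Lp.coeFn_compMeasurePreserving v hmp
  { toFun := Lp.compMeasurePreserving shift hmp
    map_add' := fun a b => map_add _ a b
    map_smul' := by
      intro c v
      apply Lp.ext (p := 2) (μ := μ)
      have h1 : ∀ᵐ ω ∂μ, ((c • v : Lp ℝ 2 μ) : (ℤ → ℝ) → ℝ) (shift ω)
          = c * (v : (ℤ → ℝ) → ℝ) (shift ω) :=
        hmp.quasiMeasurePreserving.ae
          (by filter_upwards [Lp.coeFn_smul c v] with ω h using by simpa using h)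
      filter_upwards [hU0coe (c • v), h1, Lp.coeFn_smul c (Lp.compMeasurePreserving shift hmp v),
        hU0coe v] with ω e1 e2 e3 e4
      calc ((Lp.compMeasurePreserving shift hmp (c • v) : Lp ℝ 2 μ) : (ℤ → ℝ) → ℝ) ω
          = ((c • v : Lp ℝ 2 μ) : (ℤ → ℝ) → ℝ) (shift ω) := e1
        _ = c * (v : (ℤ → ℝ) → ℝ) (shift ω) := e2
        _ = c * ((Lp.compMeasurePreserving shift hmp v : Lp ℝ 2 μ) : (ℤ → ℝ) → ℝ) ω := by rw [e4]; rfl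
        _ = ((c • (Lp.compMeasurePreserving shift hmp v) : Lp ℝ 2 μ) : (ℤ → ℝ) → ℝ) ω := by
            rw [e3]; rfl
    cont := (Lp.isometry_compMeasurePreserving hmp).continuous }

lemma koopman_coeFn [IsProbabilityMeasure μ] (hmp : MeasurePreserving shift μ μ)
    (v : Lp ℝ 2 μ) : ((koopman hmp v : Lp ℝ 2 μ) : (ℤ → ℝ) → ℝ) =ᵐ[μ] (v : (ℤ → ℝ) → ℝ) ∘ shift :=
  Lp.coeFn_compMeasurePreserving v hmp

lemma koopman_norm_le [IsProbabilityMeasure μ] (hmp : MeasurePreserving shift μ μ) :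
    ‖koopman hmp‖ ≤ 1 :=
  ContinuousLinearMap.opNorm_le_bound _ zero_le_one fun v => by
    rw [one_mul]
    exact le_of_eq (Lp.norm_compMeasurePreserving v hmp)

set_option maxHeartbeats 1000000 in
lemma meanErgodicL1 (μ : Measure (ℤ → ℝ)) [IsProbabilityMeasure μ]
    (herg : Ergodic shift μ) (g : (ℤ → ℝ) → ℝ) (hg : MemLp g 2 μ) :
    Tendsto (fun n : ℕ =>
      ∫ ω, |(1 / (n : ℝ)) * (∑ t ∈ Finset.range n, g ((shift^[t]) ω)) - ∫ y, g y ∂μ| ∂μ)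
      atTop (nhds 0) := by
  have hmp : MeasurePreserving shift μ μ := herg.toMeasurePreserving
  set U : Lp ℝ 2 μ →L[ℝ] Lp ℝ 2 μ := koopman hmp with hU
  have hU0coe : ∀ v : Lp ℝ 2 μ, (U v : (ℤ → ℝ) → ℝ) =ᵐ[μ] (v : (ℤ → ℝ) → ℝ) ∘ shift :=
    fun v => koopman_coeFn hmp v
  have hUnorm : ‖U‖ ≤ 1 := koopman_norm_le hmp
  set x : Lp ℝ 2 μ := hg.toLp g with hx
  have hvn := U.tendsto_birkhoffAverage_orthogonalProjection (𝕜 := ℝ) hUnorm x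
  set y : Lp ℝ 2 μ := ↑((LinearMap.eqLocus (U : Lp ℝ 2 μ →ₗ[ℝ] Lp ℝ 2 μ) ((1 : Lp ℝ 2 μ →L[ℝ] Lp ℝ 2 μ) : Lp ℝ 2 μ →ₗ[ℝ] Lp ℝ 2 μ)).orthogonalProjectionOnto x)
    with hy
  have hfix : U y = y := by
    have h2 := ((LinearMap.eqLocus (U : Lp ℝ 2 μ →ₗ[ℝ] Lp ℝ 2 μ) ((1 : Lp ℝ 2 μ →L[ℝ] Lp ℝ 2 μ) : Lp ℝ 2 μ →ₗ[ℝ] Lp ℝ 2 μ)).orthogonalProjectionOnto x).2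
    rw [LinearMap.mem_eqLocus] at h2
    exact h2
  have hy_shift : ((y : (ℤ → ℝ) → ℝ) ∘ shift) =ᵐ[μ] (y : (ℤ → ℝ) → ℝ) := by
    have := (hU0coe y).symm
    rwa [show U y = y from hfix] at this
  obtain ⟨c, hc⟩ := herg.ae_eq_const_of_ae_eq_comp₀
    (Lp.aestronglyMeasurable y).aemeasurable.nullMeasurable hy_shift
  -- pointwise description of iterates
  have hUk : ∀ k : ℕ, (((⇑U)^[k] x : Lp ℝ 2 μ) : (ℤ → ℝ) → ℝ) =ᵐ[μ] fun ω => g ((shift^[k]) ω) := by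
    intro k; induction k with
    | zero => simpa using hg.coeFn_toLp
    | succ k ih =>
      rw [Function.iterate_succ_apply']
      have h1 : (U ((⇑U)^[k] x) : (ℤ → ℝ) → ℝ) =ᵐ[μ] (((⇑U)^[k] x : Lp ℝ 2 μ) : (ℤ → ℝ) → ℝ) ∘ shift :=
        hU0coe _
      have h2 : ∀ᵐ ω ∂μ, (((⇑U)^[k] x : Lp ℝ 2 μ) : (ℤ → ℝ) → ℝ) (shift ω) = g ((shift^[k]) (shift ω)) :=
        hmp.quasiMeasurePreserving.ae ih
      filter_upwards [h1, h2] with ω e1 e2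
      show (U ((⇑U)^[k] x) : (ℤ → ℝ) → ℝ) ω = g ((shift^[k + 1]) ω)
      rw [Function.iterate_succ_apply]
      exact e1.trans e2
  have hsum : ∀ n : ℕ, ((∑ k ∈ Finset.range n, (⇑U)^[k] x : Lp ℝ 2 μ) : (ℤ → ℝ) → ℝ)
      =ᵐ[μ] fun ω => ∑ k ∈ Finset.range n, g ((shift^[k]) ω) := by
    intro n; induction n with
    | zero => simp only [Finset.sum_range_zero]; exact Lp.coeFn_zero ℝ 2 μ
    | succ n ih =>
      rw [Finset.sum_range_succ]
      filter_upwards [Lp.coeFn_add (∑ k ∈ Finset.range n, (⇑U)^[k] x) ((⇑U)^[n] x), ih, hUk n]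
        with ω e1 e2 e3
      rw [e1]
      simp only [Pi.add_apply, Finset.sum_range_succ, e2, e3]
  have hae : ∀ n : ℕ, ((birkhoffAverage ℝ (⇑U) _root_.id n x : Lp ℝ 2 μ) : (ℤ → ℝ) → ℝ)
      =ᵐ[μ] fun ω => (1 / (n : ℝ)) * ∑ k ∈ Finset.range n, g ((shift^[k]) ω) := by
    intro n
    have hbs : birkhoffAverage ℝ (⇑U) _root_.id n x
        = (n : ℝ)⁻¹ • (∑ k ∈ Finset.range n, (⇑U)^[k] x : Lp ℝ 2 μ) := by
      simp [birkhoffAverage, birkhoffSum]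
    rw [hbs]
    filter_upwards [Lp.coeFn_smul ((n : ℝ)⁻¹) (∑ k ∈ Finset.range n, (⇑U)^[k] x : Lp ℝ 2 μ), hsum n]
      with ω e1 e2
    rw [e1, Pi.smul_apply, smul_eq_mul, e2, one_div]
  -- L² convergence
  have hL2 : Tendsto (fun n => ‖birkhoffAverage ℝ (⇑U) _root_.id n x - y‖) atTop (nhds 0) := by
    rw [← tendsto_iff_norm_sub_tendsto_zero]
    exact hvn
  have hzero : Tendsto (fun n : ℕ =>
      ∫ ω, |(1 / (n : ℝ)) * (∑ t ∈ Finset.range n, g ((shift^[t]) ω)) - c| ∂μ) atTop (nhds 0) := by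
    apply squeeze_zero (fun n => integral_nonneg fun ω => abs_nonneg _) _ hL2
    intro n
    have hcongr : ∫ ω, |(1 / (n : ℝ)) * (∑ t ∈ Finset.range n, g ((shift^[t]) ω)) - c| ∂μ
        = ∫ ω, |((birkhoffAverage ℝ (⇑U) _root_.id n x - y : Lp ℝ 2 μ) : (ℤ → ℝ) → ℝ) ω| ∂μ := by
      apply integral_congr_ae
      filter_upwards [Lp.coeFn_sub (birkhoffAverage ℝ (⇑U) _root_.id n x) y, hae n, hc]
        with ω e1 e2 e3
      rw [e1, Pi.sub_apply, e2, e3]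
      rfl
    rw [hcongr]
    exact key_L1_le_L2 _
  -- identify the constant
  have hint : Integrable g μ := hg.integrable one_le_two
  have hint_comp : ∀ k : ℕ, Integrable (fun ω => g ((shift^[k]) ω)) μ := fun k =>
    ((hmp.iterate k).integrable_comp hg.aestronglyMeasurable).2 hint
  have hint_avg : ∀ n : ℕ,
      Integrable (fun ω => (1 / (n : ℝ)) * ∑ k ∈ Finset.range n, g ((shift^[k]) ω)) μ := fun n =>
    (integrable_finset_sum _ fun k _ => hint_comp k).const_mul _
  have hint_eq : ∀ n : ℕ, 1 ≤ n →
      ∫ ω, (1 / (n : ℝ)) * ∑ k ∈ Finset.range n, g ((shift^[k]) ω) ∂μ = ∫ y, g y ∂μ := by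
    intro n hn
    rw [integral_const_mul, integral_finset_sum _ fun k _ => hint_comp k]
    have : ∀ k ∈ Finset.range n, ∫ ω, g ((shift^[k]) ω) ∂μ = ∫ y, g y ∂μ := fun k _ =>
      integral_comp_iterate hmp k hg.aestronglyMeasurable
    rw [Finset.sum_congr rfl this, Finset.sum_const, Finset.card_range, nsmul_eq_mul]
    have hn0 : (n : ℝ) ≠ 0 := Nat.cast_ne_zero.2 (by omega)
    field_simp
  have htc : Tendsto (fun n : ℕ =>
      ∫ ω, (1 / (n : ℝ)) * ∑ k ∈ Finset.range n, g ((shift^[k]) ω) ∂μ) atTop (nhds c) := by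
    rw [tendsto_iff_dist_tendsto_zero]
    apply squeeze_zero (fun n => dist_nonneg) _ hzero
    intro n
    have h4 : (∫ ω, (1 / (n : ℝ)) * ∑ k ∈ Finset.range n, g ((shift^[k]) ω) ∂μ) - c
        = ∫ ω, ((1 / (n : ℝ)) * ∑ k ∈ Finset.range n, g ((shift^[k]) ω) - c) ∂μ := by
      rw [integral_sub (hint_avg n) (integrable_const c), integral_const]
      simp
    rw [Real.dist_eq, h4]
    calc |∫ ω, ((1 / (n : ℝ)) * ∑ k ∈ Finset.range n, g ((shift^[k]) ω) - c) ∂μ|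
        ≤ ∫ ω, |(1 / (n : ℝ)) * ∑ k ∈ Finset.range n, g ((shift^[k]) ω) - c| ∂μ := by
          simpa [Real.norm_eq_abs] using
            norm_integral_le_integral_norm (μ := μ)
              (f := fun ω => (1 / (n : ℝ)) * ∑ k ∈ Finset.range n, g ((shift^[k]) ω) - c)
      _ = _ := rfl
  have htg : Tendsto (fun n : ℕ =>
      ∫ ω, (1 / (n : ℝ)) * ∑ k ∈ Finset.range n, g ((shift^[k]) ω) ∂μ) atTop
      (nhds (∫ y, g y ∂μ)) := by
    refine Tendsto.congr' ?_ tendsto_const_nhds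
    filter_upwards [eventually_ge_atTop 1] with n hn
    exact (hint_eq n hn).symm
  have hceq : c = ∫ y, g y ∂μ := tendsto_nhds_unique htc htg
  rwa [hceq] at hzero

set_option maxHeartbeats 1000000 in
/-- Regression: for a bounded stationary ergodic real process, if the predictors
`X̂_{-t}` (σ(X^{-t})-measurable, uniformly bounded) converge in probability to
`X̂ = E{X₀|X^-}`, then `|X₀ - X̂_{-t}|² → |X₀ - X̂|²` in `L¹` and the on-line average
squared errors converge: `(1/n) ∑_{t<n} |X_t - X̂_t|² → E|X₀ - X̂|²` in `L¹`, where
`X̂_t(ω) = X̂_{-t}(T^t ω)`. -/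
theorem stmt_18 (μ : Measure (ℤ → ℝ)) [IsProbabilityMeasure μ]
    (herg : Ergodic shift μ)
    (K : ℝ) (hK : ∀ᵐ ω ∂μ, ∀ t : ℤ, |ω t| ≤ K)
    (Xhm : ℕ → (ℤ → ℝ) → ℝ)
    (hmeas : ∀ t, StronglyMeasurable[recentSA t] (Xhm t))
    (C : ℝ) (hbdd : ∀ t, ∀ᵐ ω ∂μ, |Xhm t ω| ≤ C)
    (hprob : TendstoInMeasure μ Xhm atTop (Xopt μ)) :
    Tendsto (fun t : ℕ =>
        ∫ ω, |(|ω 0 - Xhm t ω| ^ 2) - (|ω 0 - Xopt μ ω| ^ 2)| ∂μ) atTop (nhds 0) ∧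
    Tendsto (fun n : ℕ =>
        ∫ ω, |(1 / (n : ℝ)) * (∑ t ∈ Finset.range n, |ω (t : ℤ) - Xhm t (shift^[t] ω)| ^ 2)
            - ∫ ω', |ω' 0 - Xopt μ ω'| ^ 2 ∂μ| ∂μ)
      atTop (nhds 0) := by
  have hmp : MeasurePreserving shift μ μ := herg.toMeasurePreserving
  set F : ℕ → (ℤ → ℝ) → ℝ := fun t ω => |ω 0 - Xhm t ω| ^ 2 with hF
  set G : (ℤ → ℝ) → ℝ := fun ω => |ω 0 - Xopt μ ω| ^ 2 with hG
  -- basic positivity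
  have hKnn : 0 ≤ K := by
    obtain ⟨ω, hω⟩ := hK.exists
    exact (abs_nonneg (ω 0)).trans (hω 0)
  -- measurability
  have hrec_le : ∀ t, recentSA t ≤ (inferInstance : MeasurableSpace (ℤ → ℝ)) := fun t =>
    Measurable.comap_le (measurable_pi_lambda _ fun i => measurable_pi_apply _)
  have hpast_le : pastSA ≤ (inferInstance : MeasurableSpace (ℤ → ℝ)) :=
    Measurable.comap_le (measurable_pi_lambda _ fun i => measurable_pi_apply _)
  have hXhm_meas : ∀ t, AEStronglyMeasurable (Xhm t) μ := fun t =>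
    ((hmeas t).mono (hrec_le t)).aestronglyMeasurable
  have hXopt_meas : AEStronglyMeasurable (Xopt μ) μ :=
    (stronglyMeasurable_condExp.mono hpast_le).aestronglyMeasurable
  have hFmeas : ∀ t, AEStronglyMeasurable (F t) μ := fun t =>
    ((continuous_abs.measurable.comp_aemeasurable ((measurable_pi_apply 0).aemeasurable.sub
      (hXhm_meas t).aemeasurable)).pow_const 2).aestronglyMeasurable
  have hGmeas : AEStronglyMeasurable G μ :=
    ((continuous_abs.measurable.comp_aemeasurable ((measurable_pi_apply 0).aemeasurable.sub
      hXopt_meas.aemeasurable)).pow_const 2).aestronglyMeasurable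
  have hdFGmeas : ∀ t, AEStronglyMeasurable (fun ω => |F t ω - G ω|) μ := fun t => by
    simpa [Real.norm_eq_abs] using ((hFmeas t).sub hGmeas).norm
  -- bound on the conditional expectation
  have hXopt_bdd : ∀ᵐ ω ∂μ, |Xopt μ ω| ≤ K := by
    have h0 : ∀ᵐ ω ∂μ, |(fun ω : ℤ → ℝ => ω 0) ω| ≤ ((⟨K, hKnn⟩ : NNReal) : ℝ) :=
      hK.mono fun ω h => by simpa using h 0
    exact ae_bdd_condExp_of_ae_bdd (m := pastSA) h0
  -- uniform bounds
  set D : ℝ := (K + max C K) ^ 2 with hD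
  have hball : ∀ᵐ ω ∂μ, (∀ t : ℕ, |F t ω| ≤ D) ∧ |G ω| ≤ D := by
    filter_upwards [hK, ae_all_iff.2 hbdd, hXopt_bdd] with ω h1 h2 h3
    have habs : ∀ a b : ℝ, |a| ≤ K → |b| ≤ max C K → |(|a - b|) ^ 2| ≤ D := by
      intro a b ha hb
      have h5 : |a - b| ≤ K + max C K := by
        calc |a - b| ≤ |a| + |b| := abs_sub _ _
          _ ≤ K + max C K := add_le_add ha hb
      have h6 : |a - b| ^ 2 ≤ (K + max C K) ^ 2 :=
        pow_le_pow_left₀ (abs_nonneg _) h5 2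
      rwa [abs_of_nonneg (pow_nonneg (abs_nonneg _) 2)]
    exact ⟨fun t => habs _ _ (h1 0) ((h2 t).trans (le_max_left _ _)),
      habs _ _ (h1 0) (h3.trans (le_max_right _ _))⟩
  -- Part 1
  have goal1 : Tendsto (fun t : ℕ => ∫ ω, |F t ω - G ω| ∂μ) atTop (nhds 0) := by
    apply Filter.tendsto_of_subseq_tendsto
    intro ns hns
    have hsub : TendstoInMeasure μ (fun i => Xhm (ns i)) atTop (Xopt μ) := fun ε hε =>
      (hprob ε hε).comp hns
    obtain ⟨ms, -, hms⟩ := hsub.exists_seq_tendsto_ae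
    refine ⟨ms, ?_⟩
    have hdom := tendsto_integral_of_dominated_convergence (μ := μ)
      (F := fun i ω => |F (ns (ms i)) ω - G ω|) (f := fun _ => (0 : ℝ))
      (bound := fun _ => 2 * D) (fun i => hdFGmeas _) (integrable_const _)
      (fun i => by
        filter_upwards [hball] with ω hb
        rw [Real.norm_eq_abs, abs_abs]
        calc |F (ns (ms i)) ω - G ω| ≤ |F (ns (ms i)) ω| + |G ω| := abs_sub _ _
          _ ≤ D + D := add_le_add (hb.1 _) hb.2
          _ = 2 * D := by ring)
      (by
        filter_upwards [hms] with ω hω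
        have hcont : Continuous fun z : ℝ => |(|ω 0 - z|) ^ 2 - G ω| :=
          (((continuous_const.sub continuous_id).abs.pow 2).sub continuous_const).abs
        have h7 := (hcont.tendsto (Xopt μ ω)).comp hω
        simpa [hF, hG, Function.comp_def] using h7)
    simpa using hdom
  refine ⟨goal1, ?_⟩
  -- Part 2
  have hGmem : MemLp G 2 μ := MemLp.of_bound hGmeas D
    (by filter_upwards [hball] with ω h using by simpa [Real.norm_eq_abs] using h.2)
  have hME := meanErgodicL1 μ herg G hGmem
  have hcesaro : Tendsto (fun n : ℕ =>
      (n : ℝ)⁻¹ • ∑ t ∈ Finset.range n, ∫ ω, |F t ω - G ω| ∂μ) atTop (nhds 0) := goal1.cesaro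
  -- integrability of shifted functions
  have hFint_comp : ∀ t : ℕ, Integrable (fun ω => F t ((shift^[t]) ω)) μ := by
    intro t
    refine memLp_one_iff_integrable.1 (MemLp.of_bound
      ((hFmeas t).comp_quasiMeasurePreserving (hmp.iterate t).quasiMeasurePreserving) D ?_)
    filter_upwards [ae_comp_iterate hmp t (hball.mono fun ω h => h.1 t)] with ω h
    simpa [Real.norm_eq_abs] using h
  have hGint_comp : ∀ t : ℕ, Integrable (fun ω => G ((shift^[t]) ω)) μ := by
    intro t
    refine memLp_one_iff_integrable.1 (MemLp.of_bound
      (hGmeas.comp_quasiMeasurePreserving (hmp.iterate t).quasiMeasurePreserving) D ?_)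
    filter_upwards [ae_comp_iterate hmp t (hball.mono fun ω h => h.2)] with ω h
    simpa [Real.norm_eq_abs] using h
  have hdiff_int : ∀ t : ℕ, Integrable (fun ω => F t ((shift^[t]) ω) - G ((shift^[t]) ω)) μ :=
    fun t => (hFint_comp t).sub (hGint_comp t)
  have hu_int : ∀ n : ℕ, Integrable (fun ω =>
      (1 / (n : ℝ)) * ∑ t ∈ Finset.range n, (F t ((shift^[t]) ω) - G ((shift^[t]) ω))) μ :=
    fun n => (integrable_finset_sum _ fun t _ => hdiff_int t).const_mul _
  have hv_int : ∀ n : ℕ, Integrable (fun ω =>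
      (1 / (n : ℝ)) * ∑ t ∈ Finset.range n, G ((shift^[t]) ω) - ∫ y, G y ∂μ) μ :=
    fun n => ((integrable_finset_sum _ fun t _ => hGint_comp t).const_mul _).sub
      (integrable_const _)
  -- the final bound
  have hle : ∀ n : ℕ,
      ∫ ω, |(1 / (n : ℝ)) * (∑ t ∈ Finset.range n, F t ((shift^[t]) ω)) - ∫ y, G y ∂μ| ∂μ
      ≤ ((n : ℝ)⁻¹ • ∑ t ∈ Finset.range n, ∫ ω, |F t ω - G ω| ∂μ)
        + ∫ ω, |(1 / (n : ℝ)) * (∑ t ∈ Finset.range n, G ((shift^[t]) ω)) - ∫ y, G y ∂μ| ∂μ := by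
    intro n
    have hnn : (0 : ℝ) ≤ 1 / (n : ℝ) := by positivity
    have hsplit : ∀ ω : ℤ → ℝ,
        (1 / (n : ℝ)) * (∑ t ∈ Finset.range n, F t ((shift^[t]) ω)) - ∫ y, G y ∂μ
        = ((1 / (n : ℝ)) * ∑ t ∈ Finset.range n, (F t ((shift^[t]) ω) - G ((shift^[t]) ω)))
          + ((1 / (n : ℝ)) * ∑ t ∈ Finset.range n, G ((shift^[t]) ω) - ∫ y, G y ∂μ) := by
      intro ω
      rw [Finset.sum_sub_distrib]
      ring
    calc ∫ ω, |(1 / (n : ℝ)) * (∑ t ∈ Finset.range n, F t ((shift^[t]) ω)) - ∫ y, G y ∂μ| ∂μ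
        = ∫ ω, |((1 / (n : ℝ)) * ∑ t ∈ Finset.range n, (F t ((shift^[t]) ω) - G ((shift^[t]) ω)))
          + ((1 / (n : ℝ)) * ∑ t ∈ Finset.range n, G ((shift^[t]) ω) - ∫ y, G y ∂μ)| ∂μ := by
          simp_rw [hsplit]
      _ ≤ ∫ ω, (|(1 / (n : ℝ)) * ∑ t ∈ Finset.range n, (F t ((shift^[t]) ω) - G ((shift^[t]) ω))|
          + |(1 / (n : ℝ)) * ∑ t ∈ Finset.range n, G ((shift^[t]) ω) - ∫ y, G y ∂μ|) ∂μ :=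
          integral_mono ((hu_int n).add (hv_int n)).abs ((hu_int n).abs.add (hv_int n).abs)
            (fun ω => abs_add_le _ _)
      _ = (∫ ω, |(1 / (n : ℝ)) * ∑ t ∈ Finset.range n, (F t ((shift^[t]) ω) - G ((shift^[t]) ω))| ∂μ)
          + ∫ ω, |(1 / (n : ℝ)) * (∑ t ∈ Finset.range n, G ((shift^[t]) ω)) - ∫ y, G y ∂μ| ∂μ :=
          integral_add (hu_int n).abs (hv_int n).abs
      _ ≤ _ := by
          refine add_le_add ?_ le_rfl
          calc ∫ ω, |(1 / (n : ℝ)) * ∑ t ∈ Finset.range n, (F t ((shift^[t]) ω) - G ((shift^[t]) ω))| ∂μ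
              ≤ ∫ ω, (1 / (n : ℝ)) * ∑ t ∈ Finset.range n, |F t ((shift^[t]) ω) - G ((shift^[t]) ω)| ∂μ := by
                refine integral_mono (hu_int n).abs
                  ((integrable_finset_sum _ fun t _ => (hdiff_int t).abs).const_mul _) fun ω => ?_
                rw [abs_mul, abs_of_nonneg hnn]
                exact mul_le_mul_of_nonneg_left (Finset.abs_sum_le_sum_abs _ _) hnn
            _ = (1 / (n : ℝ)) * ∑ t ∈ Finset.range n, ∫ ω, |F t ((shift^[t]) ω) - G ((shift^[t]) ω)| ∂μ := by
                rw [integral_const_mul, integral_finset_sum _ fun t _ => (hdiff_int t).abs]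
            _ = (n : ℝ)⁻¹ • ∑ t ∈ Finset.range n, ∫ ω, |F t ω - G ω| ∂μ := by
                rw [smul_eq_mul, one_div]
                congr 1
                refine Finset.sum_congr rfl fun t _ => ?_
                exact integral_comp_iterate hmp t (hdFGmeas t)
  have hfinal : Tendsto (fun n : ℕ =>
      ∫ ω, |(1 / (n : ℝ)) * (∑ t ∈ Finset.range n, F t ((shift^[t]) ω)) - ∫ y, G y ∂μ| ∂μ)
      atTop (nhds 0) := by
    refine squeeze_zero (fun n => integral_nonneg fun ω => abs_nonneg _) hle ?_
    simpa using hcesaro.add hME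
  -- translate to the required form
  have hsummand : ∀ (ω : ℤ → ℝ) (t : ℕ),
      |ω (t : ℤ) - Xhm t ((shift^[t]) ω)| ^ 2 = F t ((shift^[t]) ω) := by
    intro ω t
    rw [hF]
    simp only []
    rw [shift_iterate_apply, zero_add]
  have hfun : (fun n : ℕ =>
      ∫ ω, |(1 / (n : ℝ)) * (∑ t ∈ Finset.range n, |ω (t : ℤ) - Xhm t (shift^[t] ω)| ^ 2)
          - ∫ ω', |ω' 0 - Xopt μ ω'| ^ 2 ∂μ| ∂μ)
      = (fun n : ℕ =>
      ∫ ω, |(1 / (n : ℝ)) * (∑ t ∈ Finset.range n, F t ((shift^[t]) ω)) - ∫ y, G y ∂μ| ∂μ) := by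
    funext n
    congr 1
    funext ω
    rw [Finset.sum_congr rfl fun t _ => hsummand ω t]
  rw [hfun]
  exact hfinal
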